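/- If the edge set of a graph G can be partitioned into k₁ complete bipartite subgraphs of which k₂ are stars, then there is a partition of E(G) into at most k₁ complete bipartite subgraphs K_{A₁,B₁},…,K_{A_k,B_k} such that the first k₂ parts are stars and for every j > k₂ both sides A_j and B_j are disjoint from the union of the centers A₁,…,A_{k₂} of the stars. -/
import Mathlib

open Finset

/-- `A i`, `B i` (for `i : Fin k`) form a bipartite decomposition of `G`. -/
def IsBipDecomp {V : Type*} [DecidableEq V] (G : SimpleGraph V)
    {k : ℕ} (A B : Fin k → Finset V) : Prop :=
  (∀ i, Disjoint (A i) (B i)) ∧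
  (∀ i, ∀ a ∈ A i, ∀ b ∈ B i, G.Adj a b) ∧
  ∀ e ∈ G.edgeSet, ∃! i : Fin k, e ∈ (A i ×ˢ B i).image fun p => s(p.1, p.2)

private lemma mem_bip {V : Type*} [DecidableEq V] (A B : Finset V) (x y : V) :
    s(x,y) ∈ (A ×ˢ B).image (fun p => s(p.1, p.2)) ↔
      (x ∈ A ∧ y ∈ B) ∨ (y ∈ A ∧ x ∈ B) := by
  simp only [Finset.mem_image, Finset.mem_product, Prod.exists, Sym2.eq_iff]
  constructor
  · rintro ⟨a, b, ⟨ha, hb⟩, (⟨rfl, rfl⟩ | ⟨rfl, rfl⟩)⟩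
    · exact Or.inl ⟨ha, hb⟩
    · exact Or.inr ⟨ha, hb⟩
  · rintro (⟨hx, hy⟩ | ⟨hy, hx⟩)
    · exact ⟨x, y, ⟨hx, hy⟩, Or.inl ⟨rfl, rfl⟩⟩
    · exact ⟨y, x, ⟨hy, hx⟩, Or.inr ⟨rfl, rfl⟩⟩

/-- If `E(G)` can be partitioned into `k₁` complete bipartite subgraphs of which
the first `k₂` are stars, then there is a partition into `k ≤ k₁` complete
bipartite subgraphs in which the first `k₂` parts are stars and all later parts
have both sides disjoint from the star centers. -/
theorem stmt9 {V : Type*} [Fintype V] [DecidableEq V] (G : SimpleGraph V)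
    (k₁ k₂ : ℕ) (hk : k₂ ≤ k₁) (A B : Fin k₁ → Finset V) (hdec : IsBipDecomp G A B)
    (hstar : ∀ i : Fin k₁, (i : ℕ) < k₂ → (A i).card = 1) :
    ∃ (k : ℕ) (_ : k ≤ k₁) (_ : k₂ ≤ k) (A' B' : Fin k → Finset V),
      IsBipDecomp G A' B' ∧
      (∀ i : Fin k, (i : ℕ) < k₂ → (A' i).card = 1) ∧
      (∀ j : Fin k, k₂ ≤ (j : ℕ) →
        ∀ i : Fin k, (i : ℕ) < k₂ →
          (∀ x ∈ A' j, x ∉ A' i) ∧ (∀ x ∈ B' j, x ∉ A' i)) := by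
  classical
  obtain ⟨hAB, hadj, huniq⟩ := hdec
  have hcent : ∀ i : Fin k₁, (i : ℕ) < k₂ → ∀ a ∈ A i, ∀ b ∈ A i, a = b :=
    fun i hi => Finset.card_le_one.mp (le_of_eq (hstar i hi))
  -- the set of star centers
  set C : Finset V :=
    Finset.univ.biUnion (fun i : Fin k₁ => if (i:ℕ) < k₂ then A i else ∅) with hCdef
  have hCmem : ∀ x : V, x ∈ C ↔ ∃ i : Fin k₁, (i:ℕ) < k₂ ∧ x ∈ A i := by
    intro x
    rw [hCdef, Finset.mem_biUnion]
    constructor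
    · rintro ⟨i, -, hi⟩
      by_cases h : (i:ℕ) < k₂
      · rw [if_pos h] at hi; exact ⟨i, h, hi⟩
      · rw [if_neg h] at hi; exact absurd hi (Finset.notMem_empty x)
    · rintro ⟨i, h1, h2⟩
      exact ⟨i, Finset.mem_univ _, by rw [if_pos h1]; exact h2⟩
  have hAC : ∀ (i : Fin k₁), (i:ℕ) < k₂ → ∀ a ∈ A i, a ∈ C :=
    fun i hi a ha => (hCmem a).mpr ⟨i, hi, ha⟩
  -- `P c i`: `i` is the least star index with center `c`
  set P : V → Fin k₁ → Prop :=
    fun c i => ((i:ℕ) < k₂ ∧ c ∈ A i) ∧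
      ∀ i' : Fin k₁, ((i':ℕ) < k₂ ∧ c ∈ A i') → i ≤ i' with hPdef
  have hPlt : ∀ {c : V} {i : Fin k₁}, P c i → (i:ℕ) < k₂ ∧ c ∈ A i := by
    intro c i h; rw [hPdef] at h; exact h.1
  have hPuniq : ∀ (c : V) (i i' : Fin k₁), P c i → P c i' → i = i' := by
    intro c i i' h h'
    rw [hPdef] at h h'
    exact le_antisymm (h.2 i' h'.1) (h'.2 i h.1)
  have hPex : ∀ c ∈ C, ∃ i : Fin k₁, P c i := by
    intro c hc
    obtain ⟨i0, hi0, hA0⟩ := (hCmem c).mp hc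
    set S : Finset (Fin k₁) := Finset.univ.filter (fun i => (i:ℕ) < k₂ ∧ c ∈ A i) with hSdef
    have hS : S.Nonempty := ⟨i0, Finset.mem_filter.mpr ⟨Finset.mem_univ _, hi0, hA0⟩⟩
    refine ⟨S.min' hS, ?_⟩
    rw [hPdef]
    exact ⟨(Finset.mem_filter.mp (S.min'_mem hS)).2,
      fun i' hi' => S.min'_le i' (Finset.mem_filter.mpr ⟨Finset.mem_univ _, hi'⟩)⟩
  -- vertices moved into star `i`
  set MOV : Fin k₁ → Finset V := fun i => Finset.univ.biUnion (fun j : Fin k₁ =>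
      if k₂ ≤ (j:ℕ) then
        ((B j).filter fun b => ∃ a ∈ A j, P a i) ∪
          ((A j).filter fun a => a ∉ C ∧ ∃ b ∈ B j, P b i)
      else ∅) with hMOVdef
  have hMOV : ∀ (i : Fin k₁) (x : V), x ∈ MOV i ↔ ∃ j : Fin k₁, k₂ ≤ (j:ℕ) ∧
      ((x ∈ B j ∧ ∃ a ∈ A j, P a i) ∨ (x ∈ A j ∧ x ∉ C ∧ ∃ b ∈ B j, P b i)) := by
    intro i x
    rw [hMOVdef]
    simp only [Finset.mem_biUnion, Finset.mem_univ, true_and]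
    constructor
    · rintro ⟨j, hj⟩
      by_cases h : k₂ ≤ (j:ℕ)
      · rw [if_pos h] at hj
        rcases Finset.mem_union.mp hj with h' | h'
        · obtain ⟨hxB, ha⟩ := Finset.mem_filter.mp h'
          exact ⟨j, h, Or.inl ⟨hxB, ha⟩⟩
        · obtain ⟨hxA, hC', hb⟩ := Finset.mem_filter.mp h'
          exact ⟨j, h, Or.inr ⟨hxA, hC', hb⟩⟩
      · rw [if_neg h] at hj; exact absurd hj (Finset.notMem_empty x)
    · rintro ⟨j, hj, hcase⟩
      refine ⟨j, ?_⟩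
      rw [if_pos hj]
      rcases hcase with ⟨h1, h2⟩ | ⟨h1, h2, h3⟩
      · exact Finset.mem_union_left _ (Finset.mem_filter.mpr ⟨h1, h2⟩)
      · exact Finset.mem_union_right _ (Finset.mem_filter.mpr ⟨h1, h2, h3⟩)
  -- the new parts
  set A' : Fin k₁ → Finset V := fun i => if (i:ℕ) < k₂ then A i else A i \ C with hA'def
  set B' : Fin k₁ → Finset V :=
    fun i => if (i:ℕ) < k₂ then B i ∪ MOV i else B i \ C with hB'def
  have hA'lt : ∀ i : Fin k₁, (i:ℕ) < k₂ → A' i = A i := by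
    intro i h; simp only [hA'def]; rw [if_pos h]
  have hA'ge : ∀ i : Fin k₁, k₂ ≤ (i:ℕ) → A' i = A i \ C := by
    intro i h; simp only [hA'def]; rw [if_neg (by omega)]
  have hB'lt : ∀ i : Fin k₁, (i:ℕ) < k₂ → B' i = B i ∪ MOV i := by
    intro i h; simp only [hB'def]; rw [if_pos h]
  have hB'ge : ∀ i : Fin k₁, k₂ ≤ (i:ℕ) → B' i = B i \ C := by
    intro i h; simp only [hB'def]; rw [if_neg (by omega)]
  -- old part membership helpers
  have hold : ∀ (j : Fin k₁) {u v : V}, u ∈ A j → v ∈ B j →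
      s(u,v) ∈ (A j ×ˢ B j).image (fun p => s(p.1,p.2)) := by
    intro j u v hu hv; exact (mem_bip _ _ _ _).mpr (Or.inl ⟨hu, hv⟩)
  have hold' : ∀ (j : Fin k₁) {u v : V}, v ∈ A j → u ∈ B j →
      s(u,v) ∈ (A j ×ˢ B j).image (fun p => s(p.1,p.2)) := by
    intro j u v hv hu; exact (mem_bip _ _ _ _).mpr (Or.inr ⟨hv, hu⟩)
  have holdeq : ∀ (j₁ j₂ : Fin k₁) (e : Sym2 V), e ∈ G.edgeSet →
      e ∈ (A j₁ ×ˢ B j₁).image (fun p => s(p.1,p.2)) →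
      e ∈ (A j₂ ×ˢ B j₂).image (fun p => s(p.1,p.2)) → j₁ = j₂ := by
    intro j₁ j₂ e he h1 h2
    obtain ⟨w, -, hw⟩ := huniq e he
    exact (hw j₁ h1).trans (hw j₂ h2).symm
  -- classification of new-part edges
  have classify : ∀ (i : Fin k₁) (u v : V), u ∈ A' i → v ∈ B' i →
      ((i:ℕ) < k₂ ∧ u ∈ A i ∧ v ∈ B i) ∨
      (P u i ∧ ∃ j : Fin k₁, k₂ ≤ (j:ℕ) ∧ u ∈ A j ∧ v ∈ B j) ∨
      (P u i ∧ v ∉ C ∧ ∃ j : Fin k₁, k₂ ≤ (j:ℕ) ∧ v ∈ A j ∧ u ∈ B j) ∨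
      (k₂ ≤ (i:ℕ) ∧ u ∈ A i ∧ v ∈ B i ∧ u ∉ C ∧ v ∉ C) := by
    intro i u v hu hv
    by_cases hi : (i:ℕ) < k₂
    · rw [hA'lt i hi] at hu
      rw [hB'lt i hi] at hv
      rcases Finset.mem_union.mp hv with hv' | hv'
      · exact Or.inl ⟨hi, hu, hv'⟩
      · rcases (hMOV i v).mp hv' with ⟨j, hj, hc⟩
        rcases hc with ⟨hvB, a, haA, hPa⟩ | ⟨hvA, hvC, b, hbB, hPb⟩
        · have hau : a = u := hcent i hi a (hPlt hPa).2 u hu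
          subst hau
          exact Or.inr (Or.inl ⟨hPa, j, hj, haA, hvB⟩)
        · have hbu : b = u := hcent i hi b (hPlt hPb).2 u hu
          subst hbu
          exact Or.inr (Or.inr (Or.inl ⟨hPb, hvC, j, hj, hvA, hbB⟩))
    · have hi' : k₂ ≤ (i:ℕ) := le_of_not_gt hi
      rw [hA'ge i hi'] at hu
      rw [hB'ge i hi'] at hv
      obtain ⟨huA, huC⟩ := Finset.mem_sdiff.mp hu
      obtain ⟨hvB, hvC⟩ := Finset.mem_sdiff.mp hv
      exact Or.inr (Or.inr (Or.inr ⟨hi', huA, hvB, huC, hvC⟩))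
  -- uniqueness core
  have uniq2 : ∀ (i i' : Fin k₁) (u v u' v' : V), s(u, v) = s(u', v') → G.Adj u v →
      u ∈ A' i → v ∈ B' i → u' ∈ A' i' → v' ∈ B' i' → i = i' := by
    intro i i' u v u' v' heq hadjuv hu hv hu' hv'
    have he : s(u,v) ∈ G.edgeSet := G.mem_edgeSet.mpr hadjuv
    have h1 := classify i u v hu hv
    have h2 := classify i' u' v' hu' hv'
    rcases Sym2.eq_iff.mp heq with ⟨hh1, hh2⟩ | ⟨hh1, hh2⟩
    · subst hh1; subst hh2
      rcases h1 with ⟨hi, huA, hvB⟩ | ⟨hPu, j, hj, huA, hvB⟩ |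
          ⟨hPu, hvC, j, hj, hvA, huB⟩ | ⟨hi, huA, hvB, huC, hvC⟩ <;>
        rcases h2 with ⟨hi', huA', hvB'⟩ | ⟨hPu', j', hj', huA', hvB'⟩ |
          ⟨hPu', hvC', j', hj', hvA', huB'⟩ | ⟨hi', huA', hvB', huC', hvC'⟩
      · exact holdeq i i' _ he (hold i huA hvB) (hold i' huA' hvB')
      · exact absurd (congrArg Fin.val
          (holdeq i j' _ he (hold i huA hvB) (hold j' huA' hvB'))) (by omega)
      · exact absurd (congrArg Fin.val
          (holdeq i j' _ he (hold i huA hvB) (hold' j' hvA' huB'))) (by omega)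
      · exact holdeq i i' _ he (hold i huA hvB) (hold i' huA' hvB')
      · exact absurd (congrArg Fin.val
          (holdeq j i' _ he (hold j huA hvB) (hold i' huA' hvB'))) (by omega)
      · exact hPuniq u i i' hPu hPu'
      · have hd := holdeq j j' _ he (hold j huA hvB) (hold' j' hvA' huB')
        subst hd
        exact absurd huB' (Finset.disjoint_left.mp (hAB j) huA)
      · exact absurd (hAC i (hPlt hPu).1 u (hPlt hPu).2) huC'
      · exact absurd (congrArg Fin.val
          (holdeq j i' _ he (hold' j hvA huB) (hold i' huA' hvB'))) (by omega)
      · have hd := holdeq j j' _ he (hold' j hvA huB) (hold j' huA' hvB')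
        subst hd
        exact absurd huB (Finset.disjoint_left.mp (hAB j) huA')
      · exact hPuniq u i i' hPu hPu'
      · exact absurd (hAC i (hPlt hPu).1 u (hPlt hPu).2) huC'
      · exact holdeq i i' _ he (hold i huA hvB) (hold i' huA' hvB')
      · exact absurd (hAC i' (hPlt hPu').1 u (hPlt hPu').2) huC
      · exact absurd (hAC i' (hPlt hPu').1 u (hPlt hPu').2) huC
      · exact holdeq i i' _ he (hold i huA hvB) (hold i' huA' hvB')
    · subst hh1; subst hh2
      -- now h2 speaks about (v, u)
      rcases h1 with ⟨hi, huA, hvB⟩ | ⟨hPu, j, hj, huA, hvB⟩ |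
          ⟨hPu, hvC, j, hj, hvA, huB⟩ | ⟨hi, huA, hvB, huC, hvC⟩ <;>
        rcases h2 with ⟨hi', hvA', huB'⟩ | ⟨hPv', j', hj', hvA', huB'⟩ |
          ⟨hPv', huC', j', hj', huA', hvB'⟩ | ⟨hi', hvA', huB', hvC', huC'⟩
      · exact holdeq i i' _ he (hold i huA hvB) (hold' i' hvA' huB')
      · exact absurd (congrArg Fin.val
          (holdeq i j' _ he (hold i huA hvB) (hold' j' hvA' huB'))) (by omega)
      · exact absurd (congrArg Fin.val
          (holdeq i j' _ he (hold i huA hvB) (hold j' huA' hvB'))) (by omega)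
      · exact holdeq i i' _ he (hold i huA hvB) (hold' i' hvA' huB')
      · exact absurd (congrArg Fin.val
          (holdeq j i' _ he (hold j huA hvB) (hold' i' hvA' huB'))) (by omega)
      · have hd := holdeq j j' _ he (hold j huA hvB) (hold' j' hvA' huB')
        subst hd
        exact absurd huB' (Finset.disjoint_left.mp (hAB j) huA)
      · exact absurd (hAC i (hPlt hPu).1 u (hPlt hPu).2) huC'
      · exact absurd (hAC i (hPlt hPu).1 u (hPlt hPu).2) huC'
      · exact absurd (congrArg Fin.val
          (holdeq j i' _ he (hold' j hvA huB) (hold' i' hvA' huB'))) (by omega)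
      · exact absurd (hAC i' (hPlt hPv').1 v (hPlt hPv').2) hvC
      · exact absurd (hAC i (hPlt hPu).1 u (hPlt hPu).2) huC'
      · exact absurd (hAC i (hPlt hPu).1 u (hPlt hPu).2) huC'
      · exact holdeq i i' _ he (hold i huA hvB) (hold' i' hvA' huB')
      · exact absurd (hAC i' (hPlt hPv').1 v (hPlt hPv').2) hvC
      · exact absurd (hAC i' (hPlt hPv').1 v (hPlt hPv').2) hvC
      · exact holdeq i i' _ he (hold i huA hvB) (hold' i' hvA' huB')
  -- existence core
  have exist1 : ∀ (j : Fin k₁) (u v : V), u ∈ A j → v ∈ B j →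
      ∃ i : Fin k₁, (u ∈ A' i ∧ v ∈ B' i) ∨ (v ∈ A' i ∧ u ∈ B' i) := by
    intro j u v huA hvB
    by_cases hj : (j:ℕ) < k₂
    · exact ⟨j, Or.inl ⟨by rw [hA'lt j hj]; exact huA,
        by rw [hB'lt j hj]; exact Finset.mem_union_left _ hvB⟩⟩
    · have hj' : k₂ ≤ (j:ℕ) := le_of_not_gt hj
      by_cases huC : u ∈ C
      · obtain ⟨i, hPi⟩ := hPex u huC
        refine ⟨i, Or.inl ⟨?_, ?_⟩⟩
        · rw [hA'lt i (hPlt hPi).1]; exact (hPlt hPi).2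
        · rw [hB'lt i (hPlt hPi).1]
          exact Finset.mem_union_right _
            ((hMOV i v).mpr ⟨j, hj', Or.inl ⟨hvB, u, huA, hPi⟩⟩)
      · by_cases hvC : v ∈ C
        · obtain ⟨i, hPi⟩ := hPex v hvC
          refine ⟨i, Or.inr ⟨?_, ?_⟩⟩
          · rw [hA'lt i (hPlt hPi).1]; exact (hPlt hPi).2
          · rw [hB'lt i (hPlt hPi).1]
            exact Finset.mem_union_right _
              ((hMOV i u).mpr ⟨j, hj', Or.inr ⟨huA, huC, v, hvB, hPi⟩⟩)
        · exact ⟨j, Or.inl ⟨by rw [hA'ge j hj']; exact Finset.mem_sdiff.mpr ⟨huA, huC⟩,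
            by rw [hB'ge j hj']; exact Finset.mem_sdiff.mpr ⟨hvB, hvC⟩⟩⟩
  refine ⟨k₁, le_rfl, hk, A', B', ⟨?_, ?_, ?_⟩, ?_, ?_⟩
  · -- disjointness
    intro i
    by_cases hi : (i:ℕ) < k₂
    · rw [hA'lt i hi, hB'lt i hi, Finset.disjoint_left]
      intro a haA hab
      rcases Finset.mem_union.mp hab with h | h
      · exact Finset.disjoint_left.mp (hAB i) haA h
      · rcases (hMOV i a).mp h with ⟨j, hj, hc⟩
        rcases hc with ⟨haB, a', ha'A, hPa'⟩ | ⟨haAj, haC, -⟩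
        · have : a' = a := hcent i hi a' (hPlt hPa').2 a haA
          subst this
          exact Finset.disjoint_left.mp (hAB j) ha'A haB
        · exact haC (hAC i hi a haA)
    · rw [hA'ge i (le_of_not_gt hi), hB'ge i (le_of_not_gt hi)]
      exact (hAB i).mono Finset.sdiff_subset Finset.sdiff_subset
  · -- adjacency
    intro i a ha b hb
    by_cases hi : (i:ℕ) < k₂
    · rw [hA'lt i hi] at ha
      rw [hB'lt i hi] at hb
      rcases Finset.mem_union.mp hb with h | h
      · exact hadj i a ha b h
      · rcases (hMOV i b).mp h with ⟨j, hj, hc⟩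
        rcases hc with ⟨hbB, a', ha'A, hPa'⟩ | ⟨hbA, hbC, b', hb'B, hPb'⟩
        · have he : a' = a := hcent i hi a' (hPlt hPa').2 a ha
          exact he ▸ hadj j a' ha'A b hbB
        · have he : b' = a := hcent i hi b' (hPlt hPb').2 a ha
          exact (he ▸ hadj j b hbA b' hb'B).symm
    · rw [hA'ge i (le_of_not_gt hi)] at ha
      rw [hB'ge i (le_of_not_gt hi)] at hb
      exact hadj i a (Finset.mem_sdiff.mp ha).1 b (Finset.mem_sdiff.mp hb).1
  · -- partition
    intro e
    induction e using Sym2.inductionOn with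
    | hf x y =>
      intro he
      have hxy : G.Adj x y := G.mem_edgeSet.mp he
      obtain ⟨i₀, hi₀mem, -⟩ := huniq s(x,y) he
      obtain ⟨i, hmem⟩ : ∃ i : Fin k₁, (x ∈ A' i ∧ y ∈ B' i) ∨ (y ∈ A' i ∧ x ∈ B' i) := by
        rcases (mem_bip (A i₀) (B i₀) x y).mp hi₀mem with ⟨hx, hy⟩ | ⟨hy, hx⟩
        · exact exist1 i₀ x y hx hy
        · obtain ⟨i, h⟩ := exist1 i₀ y x hy hx
          exact ⟨i, h.symm⟩
      refine ⟨i, (mem_bip _ _ _ _).mpr hmem, ?_⟩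
      intro i' hi'
      rcases hmem with ⟨hx, hy⟩ | ⟨hy, hx⟩ <;>
        rcases (mem_bip _ _ x y).mp hi' with ⟨hx', hy'⟩ | ⟨hy', hx'⟩
      · exact uniq2 i' i x y x y rfl hxy hx' hy' hx hy
      · exact uniq2 i' i y x x y Sym2.eq_swap hxy.symm hy' hx' hx hy
      · exact uniq2 i' i x y y x Sym2.eq_swap hxy hx' hy' hy hx
      · exact uniq2 i' i y x y x rfl hxy.symm hy' hx' hy hx
  · -- stars
    intro i hi
    rw [hA'lt i hi]
    exact hstar i hi
  · -- later parts avoid the centers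
    intro j hj i hi
    constructor
    · intro x hx
      rw [hA'ge j hj] at hx
      rw [hA'lt i hi]
      intro hxA
      exact (Finset.mem_sdiff.mp hx).2 (hAC i hi x hxA)
    · intro x hx
      rw [hB'ge j hj] at hx
      rw [hA'lt i hi]
      intro hxA
      exact (Finset.mem_sdiff.mp hx).2 (hAC i hi x hxA)
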